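/- Let Δ be a simplicial complex and let 𝒞 be an ordered proper vertex k-colouring of Δ. Let Q_k be the poset on the variables {x_1,…,x_k,y_1,…,y_k} of R = K[x_1,…,x_k,y_1,…,y_k] whose only relations are x_i < y_i for 1 ≤ i ≤ k. Then the uniform face ideal I(Δ, 𝒞) is Q_k-Borel if and only if 𝒞 is a nested colouring endowed with the nesting order. -/

import Mathlib

open MvPolynomial

/-- A simplicial complex on a vertex type `V`: a collection of finite subsets (faces)
containing the empty set and closed under taking subsets. -/
structure SimpComplex (V : Type) where
  faces : Set (Finset V)
  empty_mem : ∅ ∈ faces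
  down_closed : ∀ {σ τ : Finset V}, σ ∈ faces → τ ⊆ σ → τ ∈ faces

namespace SimpComplex

variable {V : Type}

/-- `A` is an independent set of `Δ`: no two distinct members lie in a common face. -/
def IsIndep (Δ : SimpComplex V) (A : Set V) : Prop :=
  ∀ u ∈ A, ∀ v ∈ A, u ≠ v → ∀ σ ∈ Δ.faces, ¬(u ∈ σ ∧ v ∈ σ)

/-- The link of a vertex `v` in `Δ`. -/
def link [DecidableEq V] (Δ : SimpComplex V) (v : V) : Set (Finset V) :=
  {τ | τ ∈ Δ.faces ∧ v ∉ τ ∧ insert v τ ∈ Δ.faces}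

end SimpComplex

/-- A family of finsets indexed by `Fin k` is a partition of the vertex set. -/
def IsPartition {V : Type} {k : ℕ} (C : Fin k → Finset V) : Prop :=
  ∀ v : V, ∃! i, v ∈ C i

/-- A proper vertex `k`-colouring of a simplicial complex: a partition into independent sets. -/
def IsProperColouring {V : Type} {k : ℕ} (Δ : SimpComplex V) (C : Fin k → Finset V) : Prop :=
  IsPartition C ∧ ∀ i, Δ.IsIndep (C i : Set V)

/-- An ordered proper vertex `k`-colouring, given by a duplicate-free list (recording the
linear order) for each colour class; the classes partition the vertices and are independent. -/
def IsOrderedColouring {V : Type} {k : ℕ} (Δ : SimpComplex V) (C : Fin k → List V) : Prop :=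
  (∀ i, (C i).Nodup) ∧ (∀ v : V, ∃! i, v ∈ C i) ∧ (∀ i, Δ.IsIndep {v | v ∈ C i})

/-- The given linear orders on the colour classes are nesting orders: within a class,
if `v` comes before `u` then `link(u) ⊆ link(v)`.  (Thus the colouring is nested and is
endowed with the nesting order.) -/
def IsNestingOrdered {V : Type} [DecidableEq V] {k : ℕ} (Δ : SimpComplex V)
    (C : Fin k → List V) : Prop :=
  ∀ i, (C i).Pairwise (fun v u => Δ.link u ⊆ Δ.link v)

/-- The index vector of a set `σ` with respect to the ordered colouring `C`:
`eVec C σ i = j` iff the (unique) element of `σ ∩ C i` is the `j`-th element of the list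
`C i` (counting from 1), and `0` if `σ ∩ C i = ∅`. -/
def eVec {V : Type} [DecidableEq V] {k : ℕ} (C : Fin k → List V) (σ : Finset V)
    (i : Fin k) : ℕ :=
  if (C i).any (fun v => decide (v ∈ σ)) then
    (C i).findIdx (fun v => decide (v ∈ σ)) + 1
  else 0

/-- The uniform monomial of a face `σ`:  `∏ i, x_i ^ (#C_i - e_i(σ)) * y_i ^ (e_i(σ))`,
where `x_i = X (Sum.inl i)` and `y_i = X (Sum.inr i)`. -/
noncomputable def uniformMonomial (K : Type) [Field K] {V : Type} [DecidableEq V] {k : ℕ}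
    (C : Fin k → List V) (σ : Finset V) : MvPolynomial (Fin k ⊕ Fin k) K :=
  ∏ i : Fin k, (X (Sum.inl i) ^ ((C i).length - eVec C σ i) * X (Sum.inr i) ^ eVec C σ i)

/-- The uniform face ideal of `Δ` with respect to the ordered colouring `C`. -/
noncomputable def uniformFaceIdeal (K : Type) [Field K] {V : Type} [DecidableEq V] {k : ℕ}
    (Δ : SimpComplex V) (C : Fin k → List V) : Ideal (MvPolynomial (Fin k ⊕ Fin k) K) :=
  Ideal.span {m | ∃ σ ∈ Δ.faces, m = uniformMonomial K C σ}

/-- A monomial ideal of `K[x_1,…,x_k,y_1,…,y_k]` is `Q_k`-Borel, where `Q_k` is the poset on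
the variables whose only relations are `x_i < y_i`:  for every monomial `m ∈ I` with
`y_i ∣ m`, the monomial `x_i·m/y_i` lies in `I`. -/
def IsQkBorel {k : ℕ} {K : Type} [Field K]
    (I : Ideal (MvPolynomial (Fin k ⊕ Fin k) K)) : Prop :=
  ∀ a : (Fin k ⊕ Fin k) →₀ ℕ, MvPolynomial.monomial a (1 : K) ∈ I →
    ∀ i : Fin k, a (Sum.inr i) ≠ 0 →
      MvPolynomial.monomial
        (a - Finsupp.single (Sum.inr i) 1 + Finsupp.single (Sum.inl i) 1) (1 : K) ∈ I

section Helpers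

open List Finset

variable {V : Type} [DecidableEq V] {k : ℕ}

/-- The exponent vector of the uniform monomial, as a `Finsupp`. -/
noncomputable def expVec (C : Fin k → List V) (σ : Finset V) : (Fin k ⊕ Fin k) →₀ ℕ :=
  Finsupp.equivFunOnFinite.symm
    (Sum.elim (fun i => (C i).length - eVec C σ i) (fun i => eVec C σ i))

@[simp] lemma expVec_inl (C : Fin k → List V) (σ : Finset V) (i : Fin k) :
    expVec C σ (Sum.inl i) = (C i).length - eVec C σ i := rfl

@[simp] lemma expVec_inr (C : Fin k → List V) (σ : Finset V) (i : Fin k) :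
    expVec C σ (Sum.inr i) = eVec C σ i := rfl

lemma eVec_le_length (C : Fin k → List V) (σ : Finset V) (i : Fin k) :
    eVec C σ i ≤ (C i).length := by
  unfold eVec
  split
  · next h =>
    have := List.findIdx_lt_length_of_exists (p := fun v => decide (v ∈ σ))
      (by simpa [List.any_eq_true] using h)
    omega
  · exact Nat.zero_le _

lemma eVec_eq_zero {C : Fin k → List V} {σ : Finset V} {i : Fin k}
    (h : ∀ v ∈ C i, v ∉ σ) : eVec C σ i = 0 := by
  unfold eVec
  rw [if_neg]
  simpa using h

lemma findIdx_congr {α : Type*} {p q : α → Bool} :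
    ∀ l : List α, (∀ x ∈ l, p x = q x) → l.findIdx p = l.findIdx q := by
  intro l
  induction l with
  | nil => intro _; rfl
  | cons a l ih =>
    intro h
    simp only [List.findIdx_cons, h a (List.mem_cons_self), ih fun x hx => h x (List.mem_cons_of_mem a hx)]

lemma eVec_congr {C : Fin k → List V} {σ τ : Finset V} {i : Fin k}
    (h : ∀ v ∈ C i, (v ∈ σ ↔ v ∈ τ)) : eVec C σ i = eVec C τ i := by
  unfold eVec
  have h1 : ((C i).any fun v => decide (v ∈ σ)) = ((C i).any fun v => decide (v ∈ τ)) := by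
    rw [Bool.eq_iff_iff]
    simp only [List.any_eq_true, decide_eq_true_eq]
    constructor <;> rintro ⟨v, hv, hm⟩
    · exact ⟨v, hv, (h v hv).mp hm⟩
    · exact ⟨v, hv, (h v hv).mpr hm⟩
  rw [h1, findIdx_congr (C i) (fun x hx => decide_eq_decide.mpr (h x hx))]


variable {Δ : SimpComplex V}

lemma face_class_unique {i : Fin k} {C : Fin k → List V} (hind : Δ.IsIndep {v | v ∈ C i})
    {σ : Finset V} (hσ : σ ∈ Δ.faces) {u v : V} (hu : u ∈ C i) (hv : v ∈ C i)
    (huσ : u ∈ σ) (hvσ : v ∈ σ) : u = v := by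
  by_contra hne
  exact hind u hu v hv hne σ hσ ⟨huσ, hvσ⟩

lemma eVec_eq_of_mem {i : Fin k} {C : Fin k → List V} (hnd : (C i).Nodup)
    (hind : Δ.IsIndep {v | v ∈ C i})
    {σ : Finset V} (hσ : σ ∈ Δ.faces) {v : V} (hv : v ∈ C i) (hvσ : v ∈ σ) :
    eVec C σ i = (C i).idxOf v + 1 := by
  unfold eVec
  rw [if_pos (by simp only [List.any_eq_true, decide_eq_true_eq]; exact ⟨v, hv, hvσ⟩)]
  congr 1
  have hlt : (C i).idxOf v < (C i).length := List.idxOf_lt_length_iff.mpr hv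
  rw [List.findIdx_eq hlt]
  refine ⟨by simpa [List.getElem_idxOf hlt] using hvσ, ?_⟩
  intro j hj
  simp only [decide_eq_false_iff_not]
  intro hmem' 
  have hje : (C i)[j]'(by omega) = v :=
    face_class_unique hind hσ (List.getElem_mem _) hv hmem' hvσ
  have : (C i).idxOf v = j := by
    rw [← hje, List.Nodup.idxOf_getElem hnd]
  omega

lemma mem_of_eVec_eq {i : Fin k} {C : Fin k → List V} {σ : Finset V} {v : V} (hv : v ∈ C i)
    (h : eVec C σ i = (C i).idxOf v + 1) : v ∈ σ := by
  unfold eVec at h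
  split at h
  · next hany =>
    have hex : ∃ x ∈ C i, decide (x ∈ σ) = true := by
      simpa [List.any_eq_true] using hany
    have hlt : (C i).findIdx (fun v => decide (v ∈ σ)) < (C i).length :=
      List.findIdx_lt_length_of_exists hex
    have hfi : (C i).idxOf v = (C i).findIdx (fun v => decide (v ∈ σ)) := by omega
    have hmem : (C i)[(C i).findIdx fun v => decide (v ∈ σ)]'hlt ∈ σ := by
      simpa using List.findIdx_getElem (w := hlt)
    have hvlt : (C i).idxOf v < (C i).length := List.idxOf_lt_length_iff.mpr hv
    have hgv : (C i)[(C i).idxOf v]'hvlt = v := List.getElem_idxOf hvlt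
    rw [← hgv]
    simp only [hfi]
    exact hmem
  · omega

lemma mem_face_iff {i : Fin k} {C : Fin k → List V} (hnd : (C i).Nodup)
    (hind : Δ.IsIndep {v | v ∈ C i}) {σ : Finset V} (hσ : σ ∈ Δ.faces) {v : V}
    (hv : v ∈ C i) : v ∈ σ ↔ eVec C σ i = (C i).idxOf v + 1 :=
  ⟨fun h => eVec_eq_of_mem hnd hind hσ hv h, fun h => mem_of_eVec_eq hv h⟩

lemma uniformMonomial_eq (K : Type) [Field K] (C : Fin k → List V) (σ : Finset V) :
    uniformMonomial K C σ = monomial (expVec C σ) 1 := by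
  unfold uniformMonomial
  have h : ∀ i : Fin k, (X (Sum.inl i) ^ ((C i).length - eVec C σ i) *
      (X (Sum.inr i) : MvPolynomial (Fin k ⊕ Fin k) K) ^ eVec C σ i)
      = monomial (Finsupp.single (Sum.inl i) ((C i).length - eVec C σ i)
          + Finsupp.single (Sum.inr i) (eVec C σ i)) 1 := by
    intro i
    rw [X_pow_eq_monomial, X_pow_eq_monomial, monomial_mul, one_mul]
  rw [Finset.prod_congr rfl fun i _ => h i, ← monomial_sum_one]
  have he : (∑ i : Fin k, (Finsupp.single (Sum.inl i) ((C i).length - eVec C σ i)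
      + Finsupp.single (Sum.inr i) (eVec C σ i))) = expVec C σ := by
    ext w
    rw [Finset.sum_apply']
    cases w with
    | inl j =>
      rw [Finset.sum_eq_single j]
      · simp
      · intro b _ hb; simp [Finsupp.single_apply, hb]
      · simp
    | inr j =>
      rw [Finset.sum_eq_single j]
      · simp
      · intro b _ hb; simp [Finsupp.single_apply, hb]
      · simp
  rw [he]

lemma mem_uniformFaceIdeal_iff (K : Type) [Field K] (Δ : SimpComplex V) (C : Fin k → List V)
    {a : (Fin k ⊕ Fin k) →₀ ℕ} :
    monomial a (1 : K) ∈ uniformFaceIdeal K Δ C ↔ ∃ σ ∈ Δ.faces, expVec C σ ≤ a := by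
  have hset : {m | ∃ σ ∈ Δ.faces, m = uniformMonomial K C σ}
      = (fun s => monomial s (1 : K)) '' (expVec C '' Δ.faces) := by
    ext m
    simp only [Set.mem_setOf_eq, Set.mem_image, exists_exists_and_eq_and]
    constructor
    · rintro ⟨σ, hσ, rfl⟩; exact ⟨σ, hσ, (uniformMonomial_eq K C σ).symm⟩
    · rintro ⟨σ, hσ, rfl⟩; exact ⟨σ, hσ, uniformMonomial_eq K C σ |>.symm ▸ rfl⟩
  rw [uniformFaceIdeal, hset, mem_ideal_span_monomial_image]
  simp [MvPolynomial.support_monomial]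

lemma sum_expVec (C : Fin k → List V) (σ : Finset V) :
    ∑ w : Fin k ⊕ Fin k, expVec C σ w = ∑ i : Fin k, (C i).length := by
  rw [Fintype.sum_sum_type, ← Finset.sum_add_distrib]
  exact Finset.sum_congr rfl fun i _ => by
    have := eVec_le_length C σ i
    simp only [expVec_inl, expVec_inr]
    omega


lemma mutate_apply {k : ℕ} (a : (Fin k ⊕ Fin k) →₀ ℕ) (i : Fin k) (w : Fin k ⊕ Fin k) :
    ((a - Finsupp.single (Sum.inr i) 1 + Finsupp.single (Sum.inl i) 1 : (Fin k ⊕ Fin k) →₀ ℕ)) w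
      = a w - (if w = Sum.inr i then 1 else 0) + (if w = Sum.inl i then 1 else 0) := by
  rw [Finsupp.add_apply, Finsupp.tsub_apply, Finsupp.single_apply, Finsupp.single_apply]
  simp only [eq_comm]

lemma eVec_step {C : Fin k → List V} (hC : IsOrderedColouring Δ C)
    (hnest : IsNestingOrdered Δ C) {σ : Finset V} (hσ : σ ∈ Δ.faces) {i : Fin k} {j : ℕ}
    (h : eVec C σ i = j + 1) :
    ∃ σ' ∈ Δ.faces, eVec C σ' i = j ∧ ∀ l, l ≠ i → eVec C σ' l = eVec C σ l := by
  obtain ⟨hnd, hpart, hind⟩ := hC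
  have hj : j < (C i).length := by have := eVec_le_length C σ i; omega
  set v := (C i)[j]'hj with hv
  have hvC : v ∈ C i := List.getElem_mem _
  have hvσ : v ∈ σ := by
    apply mem_of_eVec_eq hvC
    rw [h, hv, List.Nodup.idxOf_getElem (hnd i)]
  have hclass : ∀ l, l ≠ i → ∀ w ∈ C l, w ∉ C i := by
    intro l hl w hw hwi
    exact hl (ExistsUnique.unique (hpart w) hw hwi)
  rcases Nat.eq_zero_or_pos j with hj0 | hjpos
  · subst hj0
    refine ⟨σ.erase v, Δ.down_closed hσ (Finset.erase_subset _ _), ?_, ?_⟩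
    · apply eVec_eq_zero
      intro w hw hwe
      have hwσ : w ∈ σ := Finset.mem_of_mem_erase hwe
      have : w = v := face_class_unique (hind i) hσ hw hvC hwσ hvσ
      exact (Finset.ne_of_mem_erase hwe) this
    · intro l hl
      apply eVec_congr
      intro w hw
      have hwv : w ≠ v := fun he => hclass l hl w hw (he ▸ hvC)
      simp [Finset.mem_erase, hwv]
  · have hj1 : j - 1 < (C i).length := by omega
    set u := (C i)[j-1]'hj1 with hu
    have huC : u ∈ C i := List.getElem_mem _
    have hlink : Δ.link v ⊆ Δ.link u :=
      (List.pairwise_iff_getElem.mp (hnest i)) (j-1) j hj1 hj (by omega)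
    have hmem_link : σ.erase v ∈ Δ.link v := by
      refine ⟨Δ.down_closed hσ (Finset.erase_subset _ _), Finset.notMem_erase _ _, ?_⟩
      rw [Finset.insert_erase hvσ]; exact hσ
    obtain ⟨hf1, hf2, hf3⟩ := hlink hmem_link
    refine ⟨insert u (σ.erase v), hf3, ?_, ?_⟩
    · rw [eVec_eq_of_mem (hnd i) (hind i) hf3 huC (Finset.mem_insert_self _ _), hu,
        List.Nodup.idxOf_getElem (hnd i)]
      omega
    · intro l hl
      apply eVec_congr
      intro w hw
      have hwv : w ≠ v := fun he => hclass l hl w hw (he ▸ hvC)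
      have hwu : w ≠ u := fun he => hclass l hl w hw (he ▸ huC)
      simp [Finset.mem_insert, Finset.mem_erase, hwv, hwu]

end Helpers
/-- Theorem 5.2: the uniform face ideal `I(Δ,𝒞)` is `Q_k`-Borel iff the
ordered colouring `𝒞` is a nested colouring endowed with the nesting order. -/
theorem stmt7 {n k : ℕ} (K : Type) [Field K] (Δ : SimpComplex (Fin n))
    (C : Fin k → List (Fin n)) (hC : IsOrderedColouring Δ C) :
    IsQkBorel (uniformFaceIdeal K Δ C) ↔ IsNestingOrdered Δ C := by
  obtain ⟨hnd, hpart, hind⟩ := hC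
  constructor
  · -- Borel → nested
    intro hB i
    rw [List.pairwise_iff_getElem]
    intro p q hp hq hpq
    intro τ hτ
    obtain ⟨hτf, huτ, hins⟩ := hτ
    set u := (C i)[q]'hq with hu
    set v := (C i)[p]'hp with hv
    have huC : u ∈ C i := List.getElem_mem _
    have hvC : v ∈ C i := List.getElem_mem _
    have huidx : (C i).idxOf u = q := List.Nodup.idxOf_getElem (hnd i) q hq
    have hvidx : (C i).idxOf v = p := List.Nodup.idxOf_getElem (hnd i) p hp
    set σ : Finset (Fin n) := insert u τ with hσdef
    have hσ : σ ∈ Δ.faces := hins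
    have huσ : u ∈ σ := Finset.mem_insert_self _ _
    have heσ : eVec C σ i = q + 1 := by
      rw [eVec_eq_of_mem (hnd i) (hind i) hσ huC huσ, huidx]
    set g : ℕ → ((Fin k ⊕ Fin k) →₀ ℕ) := fun s => Finsupp.equivFunOnFinite.symm
      (fun w => if w = Sum.inr i then s else if w = Sum.inl i then (C i).length - s
        else expVec C σ w) with hg
    have hgapp : ∀ s w, g s w = if w = Sum.inr i then s
        else if w = Sum.inl i then (C i).length - s else expVec C σ w := fun s w => rfl
    have hgq : g (q + 1) = expVec C σ := by
      ext w
      rw [hgapp]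
      rcases w with l | l
      · rcases eq_or_ne l i with rfl | hl
        · simp [heσ]
        · simp [hl]
      · rcases eq_or_ne l i with rfl | hl
        · simp [heσ]
        · simp [hl]
    have key : ∀ t, t ≤ q - p → monomial (g (q + 1 - t)) (1:K) ∈ uniformFaceIdeal K Δ C := by
      intro t
      induction t with
      | zero =>
        intro _
        have hmem : uniformMonomial K C σ ∈ uniformFaceIdeal K Δ C :=
          Ideal.subset_span ⟨σ, hσ, rfl⟩
        rw [uniformMonomial_eq] at hmem
        simpa [hgq] using hmem
      | succ t ih =>
        intro ht
        have h1 := ih (by omega)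
        have h2 := hB _ h1 i (by rw [hgapp]; simp; omega)
        have h3 : (g (q+1-t) - Finsupp.single (Sum.inr i) 1 + Finsupp.single (Sum.inl i) 1)
            = g (q+1-(t+1)) := by
          ext w
          rw [mutate_apply, hgapp, hgapp]
          rcases w with l | l
          · rcases eq_or_ne l i with rfl | hl
            · simp; omega
            · simp [hl]
          · rcases eq_or_ne l i with rfl | hl
            · simp; omega
            · simp [hl]
        rwa [h3] at h2
    have hfin := key (q - p) le_rfl
    have hqp : q + 1 - (q - p) = p + 1 := by omega
    rw [hqp, mem_uniformFaceIdeal_iff] at hfin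
    obtain ⟨ρ, hρ, hle⟩ := hfin
    have hsum1 : ∑ w : Fin k ⊕ Fin k, g (p+1) w = ∑ l : Fin k, (C l).length := by
      rw [Fintype.sum_sum_type, ← Finset.sum_add_distrib]
      refine Finset.sum_congr rfl fun l _ => ?_
      rw [hgapp, hgapp]
      rcases eq_or_ne l i with rfl | hl
      · simp; omega
      · have := eVec_le_length C σ l
        simp [hl]
        omega
    have heq : ∀ w, expVec C ρ w = g (p+1) w := by
      have h1 : ∑ w : Fin k ⊕ Fin k, expVec C ρ w = ∑ w : Fin k ⊕ Fin k, g (p+1) w := by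
        rw [sum_expVec, hsum1]
      intro w
      exact (Finset.sum_eq_sum_iff_of_le fun w _ => Finsupp.le_def.mp hle w).mp h1 w
        (Finset.mem_univ w)
    have heρ : ∀ l, eVec C ρ l = g (p+1) (Sum.inr l) := fun l => heq (Sum.inr l)
    have hρeq : ρ = insert v τ := by
      ext w
      obtain ⟨l, hwl, -⟩ := hpart w
      rw [mem_face_iff (hnd l) (hind l) hρ hwl, heρ, hgapp]
      rcases eq_or_ne l i with rfl | hl
      · rw [if_pos rfl]
        constructor
        · intro hpe
          have hwp : (C l).idxOf w = p := by omega
          have hwv : w = v := (List.idxOf_inj (y := v) hwl).mp (by rw [hwp, hvidx])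
          simp [hwv]
        · intro hw
          rcases Finset.mem_insert.mp hw with rfl | hwτ
          · rw [hvidx]
          · exfalso
            have hwσ : w ∈ σ := Finset.mem_insert_of_mem hwτ
            have hwu : w = u := face_class_unique (hind l) hσ hwl huC hwσ huσ
            exact huτ (hwu ▸ hwτ)
      · rw [if_neg (by simp [hl]), if_neg (by simp), expVec_inr,
          ← mem_face_iff (hnd l) (hind l) hσ hwl]
        have hwu : w ≠ u :=
          fun he => hl (ExistsUnique.unique (hpart w) hwl (he ▸ huC))
        have hwv : w ≠ v :=
          fun he => hl (ExistsUnique.unique (hpart w) hwl (he ▸ hvC))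
        simp [hσdef, Finset.mem_insert, hwu, hwv]
    refine ⟨hτf, ?_, ?_⟩
    · intro hvτ
      have hvσ : v ∈ σ := Finset.mem_insert_of_mem hvτ
      have hvu : v = u := face_class_unique (hind i) hσ hvC huC hvσ huσ
      have : p = q := by
        rw [← hvidx, ← huidx, hvu]
      omega
    · rw [← hρeq]; exact hρ
  · -- nested → Borel
    intro hnest a ha i hi
    rw [mem_uniformFaceIdeal_iff] at ha ⊢
    obtain ⟨σ, hσ, hle⟩ := ha
    have hle' := Finsupp.le_def.mp hle
    have hleL : ∀ l, (C l).length - eVec C σ l ≤ a (Sum.inl l) := fun l => by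
      simpa using hle' (Sum.inl l)
    have hleR : ∀ l, eVec C σ l ≤ a (Sum.inr l) := fun l => by
      simpa using hle' (Sum.inr l)
    have hlen := eVec_le_length C σ i
    rcases Nat.eq_zero_or_pos (eVec C σ i) with h0 | hpos
    · refine ⟨σ, hσ, Finsupp.le_def.mpr fun w => ?_⟩
      rw [mutate_apply]
      rcases w with l | l
      · have h1 := hleL l
        rcases eq_or_ne l i with rfl | hl
        · simp; omega
        · simp [hl]; omega
      · have h1 := hleR l
        rcases eq_or_ne l i with rfl | hl
        · simp [h0]
        · simp [hl]; omega
    · obtain ⟨j, hj⟩ : ∃ j, eVec C σ i = j + 1 := ⟨eVec C σ i - 1, by omega⟩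
      obtain ⟨σ', hσ', he1, he2⟩ := eVec_step ⟨hnd, hpart, hind⟩ hnest hσ hj
      refine ⟨σ', hσ', Finsupp.le_def.mpr fun w => ?_⟩
      rw [mutate_apply]
      rcases w with l | l
      · rcases eq_or_ne l i with rfl | hl
        · have h1 := hleL l
          simp [he1]
          omega
        · have h1 := hleL l
          simp [hl, he2 l hl]
          omega
      · rcases eq_or_ne l i with rfl | hl
        · have h1 := hleR l
          simp [he1]
          omega
        · have h1 := hleR l
          simp [hl, he2 l hl]
          omega
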